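/- SFT on products: the string Fourier transform maps operator products in hom(𝓗₋₊) to convolution products in hom(𝓗₊₋), i.e. 𝔉ₛ(ST) = 𝔉ₛ(S) * 𝔉ₛ(T) for all S, T ∈ hom(𝓗₋₊). -/

import Mathlib

open scoped ComplexInnerProductSpace ComplexOrder

private lemma span_image2_top' {E F G : Type} [AddCommGroup E] [Module ℂ E]
    [AddCommGroup F] [Module ℂ F] [AddCommGroup G] [Module ℂ G]
    (t : E →ₗ[ℂ] F →ₗ[ℂ] G) {s : Set E} {s' : Set F}
    (hs : ⊤ ≤ Submodule.span ℂ s) (hs' : ⊤ ≤ Submodule.span ℂ s')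
    (h : ⊤ ≤ Submodule.span ℂ (Set.range fun p : E × F => t p.1 p.2)) :
    ⊤ ≤ Submodule.span ℂ (Set.image2 (fun a b => t a b) s s') := by
  set M := Submodule.span ℂ (Set.image2 (fun a b => t a b) s s') with hM
  refine h.trans (Submodule.span_le.2 ?_)
  rintro _ ⟨⟨u, v⟩, rfl⟩
  have h1 : ∀ u ∈ s, ∀ v : F, t u v ∈ M := by
    intro u hu v
    have : Submodule.span ℂ s' ≤ Submodule.comap (t u) M :=
      Submodule.span_le.2 fun w hw =>
        Submodule.subset_span (Set.mem_image2_of_mem hu hw)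
    exact this (hs' trivial)
  have h2 : Submodule.span ℂ s ≤ Submodule.comap (t.flip v) M :=
    Submodule.span_le.2 fun u hu => h1 u hu v
  exact h2 (hs trivial)

private lemma inner_ext_span' {E : Type} [NormedAddCommGroup E] [InnerProductSpace ℂ E]
    {s : Set E} (hs : ⊤ ≤ Submodule.span ℂ s) {x y : E}
    (h : ∀ v ∈ s, ⟪v, x⟫ = ⟪v, y⟫) : x = y := by
  rw [← sub_eq_zero]
  have hker : Submodule.span ℂ s ≤ LinearMap.ker ((innerSL ℂ (x - y)) : E →ₗ[ℂ] ℂ) := by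
    refine Submodule.span_le.2 fun v hv => ?_
    have h1 := congrArg (starRingEnd ℂ) (h v hv)
    rw [inner_conj_symm, inner_conj_symm] at h1
    simp only [SetLike.mem_coe, LinearMap.mem_ker, ContinuousLinearMap.coe_coe,
      innerSL_apply_apply]
    rw [inner_sub_left, h1, sub_self]
  have hz : ⟪x - y, x - y⟫ = (0 : ℂ) := hker (hs trivial)
  exact inner_self_eq_zero.1 hz

private lemma clm_ext_span' {E : Type} [NormedAddCommGroup E] [InnerProductSpace ℂ E]
    {s : Set E} (hs : ⊤ ≤ Submodule.span ℂ s) {A B : E →L[ℂ] E}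
    (h : ∀ v ∈ s, A v = B v) : A = B := by
  apply ContinuousLinearMap.coe_injective
  exact LinearMap.ext_on (top_le_iff.1 hs) h

theorem sft_product_to_convolution
    {Hp Hm Hmp Hpm H2 : Type}
    [NormedAddCommGroup Hp] [InnerProductSpace ℂ Hp] [FiniteDimensional ℂ Hp]
    [NormedAddCommGroup Hm] [InnerProductSpace ℂ Hm] [FiniteDimensional ℂ Hm]
    [NormedAddCommGroup Hmp] [InnerProductSpace ℂ Hmp] [FiniteDimensional ℂ Hmp]
    [NormedAddCommGroup Hpm] [InnerProductSpace ℂ Hpm] [FiniteDimensional ℂ Hpm]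
    [NormedAddCommGroup H2] [InnerProductSpace ℂ H2] [FiniteDimensional ℂ H2]
(θ : Hp ≃ₗ⋆[ℂ] Hm)
    (hθ : ∀ x x' : Hp, ⟪x, x'⟫ = ⟪θ x', θ x⟫)
(tmp : Hm →ₗ[ℂ] Hp →ₗ[ℂ] Hmp) (tpm : Hp →ₗ[ℂ] Hm →ₗ[ℂ] Hpm)
    (htmp : ∀ (y : Hm) (x : Hp) (y' : Hm) (x' : Hp),
      ⟪tmp y x, tmp y' x'⟫ = ⟪y, y'⟫ * ⟪x, x'⟫)
    (htpm : ∀ (x : Hp) (y : Hm) (x' : Hp) (y' : Hm),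
      ⟪tpm x y, tpm x' y'⟫ = ⟪x, x'⟫ * ⟪y, y'⟫)
    (hmp_span : ⊤ ≤ Submodule.span ℂ (Set.range fun p : Hm × Hp => tmp p.1 p.2))
    (hpm_span : ⊤ ≤ Submodule.span ℂ (Set.range fun p : Hp × Hm => tpm p.1 p.2))
(Fs : (Hmp →L[ℂ] Hmp) → (Hpm →L[ℂ] Hpm))
    (hFs : ∀ (T : Hmp →L[ℂ] Hmp) (x x' : Hp) (y y' : Hm),
      ⟪tpm x y, Fs T (tpm x' y')⟫ = ⟪tmp (θ x') x, T (tmp y' (θ.symm y))⟫)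
(t2 : Hpm →ₗ[ℂ] Hpm →ₗ[ℂ] H2)
    (ht2 : ∀ (u v u' v' : Hpm), ⟪t2 u v, t2 u' v'⟫ = ⟪u, u'⟫ * ⟪v, v'⟫)
    (h2_span : ⊤ ≤ Submodule.span ℂ (Set.range fun p : Hpm × Hpm => t2 p.1 p.2))
    (Y : H2 →L[ℂ] Hpm)
    (hY : ∀ (x₁ : Hp) (y₁ : Hm) (x₂ : Hp) (y₂ : Hm),
      Y (t2 (tpm x₁ y₁) (tpm x₂ y₂)) = ⟪θ.symm y₁, x₂⟫ • tpm x₁ y₂)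
(tmap : (Hpm →L[ℂ] Hpm) → (Hpm →L[ℂ] Hpm) → (H2 →L[ℂ] H2))
    (htmap : ∀ (A B : Hpm →L[ℂ] Hpm) (u v : Hpm), tmap A B (t2 u v) = t2 (A u) (B v)) :
    ∀ S T : Hmp →L[ℂ] Hmp,
      Fs (S ∘L T) = Y ∘L tmap (Fs S) (Fs T) ∘L ContinuousLinearMap.adjoint Y := by
  classical
  intro S T
  -- orthonormal basis of Hp
  set n := Module.finrank ℂ Hp with hn
  set b : OrthonormalBasis (Fin n) ℂ Hp := stdOrthonormalBasis ℂ Hp with hb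
  -- auxiliary facts about θ
  have hθ' : ∀ (x : Hp) (y : Hm), ⟪y, θ x⟫ = ⟪x, θ.symm y⟫ := by
    intro x y
    calc ⟪y, θ x⟫ = ⟪θ (θ.symm y), θ x⟫ := by rw [θ.apply_symm_apply]
    _ = ⟪x, θ.symm y⟫ := (hθ x (θ.symm y)).symm
  -- spanning sets
  have hsb : ⊤ ≤ Submodule.span ℂ (Set.range fun i => b i) := by
    rw [← b.toBasis.span_eq]
    simp [OrthonormalBasis.coe_toBasis]
  have hsθb : ⊤ ≤ Submodule.span ℂ (Set.range fun i => θ (b i)) := by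
    intro y _
    have hy : y = θ (∑ i, ⟪b i, θ.symm y⟫ • b i) := by rw [b.sum_repr']; simp
    rw [hy, map_sum]
    refine Submodule.sum_mem _ fun i _ => ?_
    rw [θ.map_smulₛₗ]
    exact Submodule.smul_mem _ _ (Submodule.subset_span ⟨i, rfl⟩)
  -- the orthonormal family in Hmp
  set f : Fin n × Fin n → Hmp := fun p => tmp (θ (b p.2)) (b p.1) with hf
  have hforth : Orthonormal ℂ f := by
    rw [orthonormal_iff_ite]
    intro p q
    have h1 : ⟪f p, f q⟫ = ⟪θ (b p.2), θ (b q.2)⟫ * ⟪b p.1, b q.1⟫ := htmp _ _ _ _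
    rw [h1, ← hθ (b q.2) (b p.2)]
    have h2 := orthonormal_iff_ite.1 b.orthonormal
    rw [h2, h2]
    by_cases h1 : p.1 = q.1 <;> by_cases h2 : p.2 = q.2 <;>
      simp [Prod.ext_iff, h1, h2, eq_comm]
  have hfspan : ⊤ ≤ Submodule.span ℂ (Set.range f) := by
    refine (span_image2_top' tmp hsθb hsb hmp_span).trans (Submodule.span_mono ?_)
    rintro _ ⟨_, ⟨j, rfl⟩, _, ⟨i, rfl⟩, rfl⟩
    exact ⟨(i, j), rfl⟩
  set B : Module.Basis (Fin n × Fin n) ℂ Hmp := Module.Basis.mk hforth.linearIndependent hfspan with hB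
  have hBf : ∀ p, B p = f p := fun p => by rw [hB, Module.Basis.coe_mk]
  set OB : OrthonormalBasis (Fin n × Fin n) ℂ Hmp :=
    B.toOrthonormalBasis (by rwa [hB, Module.Basis.coe_mk]) with hOB
  have hOBf : ∀ p, OB p = f p := fun p => by
    rw [hOB, Module.Basis.coe_toOrthonormalBasis]; exact hBf p
  have hPar : ∀ u v : Hmp, ∑ p : Fin n × Fin n, ⟪u, f p⟫ * ⟪f p, v⟫ = ⟪u, v⟫ := by
    intro u v
    have h := OB.sum_inner_mul_inner u v
    simp only [hOBf] at h
    exact h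
  -- spanning set of H2
  have hs2 : ⊤ ≤ Submodule.span ℂ
      (Set.image2 (fun a b => t2 a b)
        (Set.range fun p : Hp × Hm => tpm p.1 p.2)
        (Set.range fun p : Hp × Hm => tpm p.1 p.2)) :=
    span_image2_top' t2 hpm_span hpm_span h2_span
  -- explicit formula for the adjoint of Y on elementary tensors
  have hYadj : ∀ (x : Hp) (y : Hm),
      ContinuousLinearMap.adjoint Y (tpm x y)
        = ∑ i, t2 (tpm x (θ (b i))) (tpm (b i) y) := by
    intro x y
    refine inner_ext_span' hs2 ?_
    rintro _ ⟨_, ⟨⟨x₁, y₁⟩, rfl⟩, _, ⟨⟨x₂, y₂⟩, rfl⟩, rfl⟩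
    have hL : ⟪t2 (tpm x₁ y₁) (tpm x₂ y₂), ContinuousLinearMap.adjoint Y (tpm x y)⟫
        = ⟪x₂, θ.symm y₁⟫ * (⟪x₁, x⟫ * ⟪y₂, y⟫) := by
      rw [ContinuousLinearMap.adjoint_inner_right, hY, inner_smul_left, htpm,
        inner_conj_symm]
    have hR : ⟪t2 (tpm x₁ y₁) (tpm x₂ y₂), ∑ i, t2 (tpm x (θ (b i))) (tpm (b i) y)⟫
        = ⟪x₂, θ.symm y₁⟫ * (⟪x₁, x⟫ * ⟪y₂, y⟫) := by
      rw [inner_sum]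
      have hterm : ∀ i, ⟪t2 (tpm x₁ y₁) (tpm x₂ y₂), t2 (tpm x (θ (b i))) (tpm (b i) y)⟫
          = (⟪x₂, b i⟫ * ⟪b i, θ.symm y₁⟫) * (⟪x₁, x⟫ * ⟪y₂, y⟫) := by
        intro i
        rw [ht2, htpm, htpm, hθ']
        ring
      simp only [hterm]
      rw [← Finset.sum_mul, b.sum_inner_mul_inner]
    exact hL.trans hR.symm
  -- now the main identity, checked against the spanning sets
  refine clm_ext_span' hpm_span ?_
  rintro _ ⟨⟨x', y'⟩, rfl⟩
  refine inner_ext_span' hpm_span ?_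
  rintro _ ⟨⟨x, y⟩, rfl⟩
  set u : Hmp := tmp (θ x') x with hu
  set v : Hmp := tmp y' (θ.symm y) with hv
  have hL : ⟪tpm x y, Fs (S ∘L T) (tpm x' y')⟫ = ⟪u, S (T v)⟫ := by
    rw [hFs]; rfl
  have hR : ⟪tpm x y,
      (Y ∘L tmap (Fs S) (Fs T) ∘L ContinuousLinearMap.adjoint Y) (tpm x' y')⟫
      = ⟪u, S (T v)⟫ := by
    rw [ContinuousLinearMap.comp_apply, ContinuousLinearMap.comp_apply,
      ← ContinuousLinearMap.adjoint_inner_left Y, hYadj, hYadj, map_sum]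
    simp only [htmap]
    rw [sum_inner]
    simp only [inner_sum]
    have hterm : ∀ i j : Fin n,
        ⟪t2 (tpm x (θ (b i))) (tpm (b i) y),
          t2 (Fs S (tpm x' (θ (b j)))) (Fs T (tpm (b j) y'))⟫
        = ⟪ContinuousLinearMap.adjoint S u, f (i, j)⟫ * ⟪f (i, j), T v⟫ := by
      intro i j
      rw [ht2, hFs, hFs, θ.symm_apply_apply, ContinuousLinearMap.adjoint_inner_left]
    simp only [hterm]
    have hPar2 : ∀ u' v' : Hmp,
        ∑ i, ∑ j, ⟪u', f (i, j)⟫ * ⟪f (i, j), v'⟫ = ⟪u', v'⟫ := by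
      intro u' v'
      rw [← hPar u' v', Fintype.sum_prod_type]
    rw [hPar2, ContinuousLinearMap.adjoint_inner_left]
  exact hL.trans hR.symm
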